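/- Let c > 0 and let λ : [0,1] → ℝ be differentiable with λ'(t) ≤ −2c for all t ∈ [0,1]. Set Λ(t) = ∫₀^t λ(u) du and let g be the generalized inverse of λ. Then for every a ∈ ℝ and every u ∈ [0,1], Λ(u) − Λ(g(a)) ≤ (u − g(a)) a − c (u − g(a))². -/

import Mathlib

open MeasureTheory ProbabilityTheory Real Set Filter

noncomputable section

/-- Generalized inverse of a nonincreasing function on `[0,1]`:
`ginv lam a` is the greatest `t ∈ [0,1]` with `lam t ≥ a` (and `0` if no such `t` exists,
by the real `sSup` junk-value convention). -/
def ginv (lam : ℝ → ℝ) (a : ℝ) : ℝ := sSup {t : ℝ | t ∈ Icc (0:ℝ) 1 ∧ a ≤ lam t}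

/-- if `λ' ≤ -2c` on `[0,1]` then, with `Λ(t) = ∫₀ᵗ λ` and `g` the generalized
inverse of `λ`, one has `Λ(u) − Λ(g(a)) ≤ (u − g(a)) a − c (u − g(a))²` for all `a ∈ ℝ` and
`u ∈ [0,1]`. -/
theorem stmt_11 (c : ℝ) (hc : 0 < c) (lam lam' : ℝ → ℝ)
    (hderiv : ∀ t ∈ Icc (0:ℝ) 1, HasDerivAt lam (lam' t) t)
    (hlam' : ∀ t ∈ Icc (0:ℝ) 1, lam' t ≤ -(2 * c)) :
    ∀ a : ℝ, ∀ u ∈ Icc (0:ℝ) 1,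
      (∫ v in (0:ℝ)..u, lam v) - (∫ v in (0:ℝ)..(ginv lam a), lam v) ≤
        (u - ginv lam a) * a - c * (u - ginv lam a) ^ 2 := by
  intro a u hu
  set S : Set ℝ := {t : ℝ | t ∈ Icc (0:ℝ) 1 ∧ a ≤ lam t} with hS
  set g : ℝ := ginv lam a with hgdef
  have hgS : g = sSup S := rfl
  have hbdd : BddAbove S := ⟨1, fun t ht => ht.1.2⟩
  -- continuity of lam on [0,1]
  have hcont : ContinuousOn lam (Icc (0:ℝ) 1) := fun t ht =>
    (hderiv t ht).continuousAt.continuousWithinAt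
  -- g ∈ [0,1]
  have hg0 : 0 ≤ g := by
    rcases eq_empty_or_nonempty S with h | ⟨t, ht⟩
    · rw [hgS, h, Real.sSup_empty]
    · exact le_trans ht.1.1 (le_csSup hbdd ht)
  have hg1 : g ≤ 1 := by
    rcases eq_empty_or_nonempty S with h | hne
    · rw [hgS, h, Real.sSup_empty]; norm_num
    · exact Real.sSup_le (fun t ht => ht.1.2) zero_le_one
  have hgI : g ∈ Icc (0:ℝ) 1 := ⟨hg0, hg1⟩
  -- monotonicity: lam t ≤ lam s - 2c(t-s) for s ≤ t in [0,1]
  have hmono : ∀ s ∈ Icc (0:ℝ) 1, ∀ t ∈ Icc (0:ℝ) 1, s ≤ t →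
      lam t ≤ lam s - 2 * c * (t - s) := by
    intro s hs t ht hst
    set f : ℝ → ℝ := fun x => lam x + 2 * c * x with hf
    have hfd : ∀ x ∈ Icc (0:ℝ) 1, HasDerivAt f (lam' x + 2 * c) x := by
      intro x hx
      have := (hderiv x hx).add (((hasDerivAt_id x).const_mul (2 * c)))
      simp only [id, mul_one] at this
      exact this
    have hanti : AntitoneOn f (Icc (0:ℝ) 1) := by
      apply antitoneOn_of_deriv_nonpos (convex_Icc 0 1)
      · exact fun x hx => ((hfd x hx).continuousAt).continuousWithinAt
      · intro x hx
        rw [interior_Icc] at hx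
        exact (hfd x (Ioo_subset_Icc_self hx)).differentiableAt.differentiableWithinAt
      · intro x hx
        rw [interior_Icc] at hx
        rw [(hfd x (Ioo_subset_Icc_self hx)).deriv]
        have := hlam' x (Ioo_subset_Icc_self hx)
        linarith
    have := hanti hs ht hst
    simp only [hf] at this
    linarith
  -- Claim A: for v ∈ [0,1] with g < v, lam v ≤ a - 2c(v - g)
  have claimA : ∀ v ∈ Icc (0:ℝ) 1, g < v → lam v ≤ a - 2 * c * (v - g) := by
    intro v hv hgv
    by_contra hcon
    push_neg at hcon
    set ε : ℝ := lam v - (a - 2 * c * (v - g)) with hε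
    have hεpos : 0 < ε := by linarith
    set w : ℝ := min v (g + ε / (2 * c)) with hw
    have h2c : (0:ℝ) < 2 * c := by linarith
    have hgw : g < w := by
      have hq : 0 < ε / (2 * c) := by positivity
      exact lt_min hgv (by linarith)
    have hwv : w ≤ v := min_le_left _ _
    have hwI : w ∈ Icc (0:ℝ) 1 := ⟨le_of_lt (lt_of_le_of_lt hg0 hgw), le_trans hwv hv.2⟩
    have hwS : w ∉ S := fun h => absurd (le_csSup hbdd h) (not_le.2 hgw)
    have hwlt : lam w < a := by
      by_contra h
      exact hwS ⟨hwI, le_of_not_gt h⟩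
    have h1 : lam v ≤ lam w - 2 * c * (v - w) := hmono w hwI v hv hwv
    have h2 : w - g ≤ ε / (2 * c) := by
      have := min_le_right v (g + ε / (2 * c))
      linarith
    have h3 : 2 * c * (w - g) ≤ ε := by
      rw [le_div_iff₀ h2c] at h2
      linarith [mul_comm (w - g) (2 * c)]
    linarith
  -- Claim B: for v ∈ [0,1] with v < g, a - 2c(v - g) ≤ lam v
  have claimB : ∀ v ∈ Icc (0:ℝ) 1, v < g → a - 2 * c * (v - g) ≤ lam v := by
    intro v hv hvg
    have hSne : S.Nonempty := by
      rcases eq_empty_or_nonempty S with h | h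
      · exfalso; rw [hgS, h, Real.sSup_empty] at hvg; linarith [hv.1]
      · exact h
    by_contra hcon
    push_neg at hcon
    set ε : ℝ := a - 2 * c * (v - g) - lam v with hε
    have hεpos : 0 < ε := by linarith
    have h2c : (0:ℝ) < 2 * c := by linarith
    set δ : ℝ := min (ε / (2 * c)) (g - v) with hδ
    have hδpos : 0 < δ := lt_min (by positivity) (by linarith)
    obtain ⟨t, htS, htgt⟩ := exists_lt_of_lt_csSup hSne (show g - δ < sSup S by rw [← hgS]; linarith)
    have hvt : v ≤ t := by
      have : δ ≤ g - v := min_le_right _ _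
      linarith
    have h1 : lam t ≤ lam v - 2 * c * (t - v) := hmono v hv t htS.1 hvt
    have h2 : δ ≤ ε / (2 * c) := min_le_left _ _
    have h3 : 2 * c * δ ≤ ε := by
      rw [le_div_iff₀ h2c] at h2; linarith [mul_comm δ (2 * c)]
    have h4 : a ≤ lam t := htS.2
    nlinarith
  -- integrability
  have hIcc : ∀ x ∈ Icc (0:ℝ) 1, ∀ y ∈ Icc (0:ℝ) 1, uIcc x y ⊆ Icc (0:ℝ) 1 := by
    intro x hx y hy
    rw [← uIcc_of_le (zero_le_one : (0:ℝ) ≤ 1)]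
    exact uIcc_subset_uIcc (by rwa [uIcc_of_le zero_le_one]) (by rwa [uIcc_of_le zero_le_one])
  have hint : ∀ x ∈ Icc (0:ℝ) 1, ∀ y ∈ Icc (0:ℝ) 1, IntervalIntegrable lam volume x y :=
    fun x hx y hy => (hcont.mono (hIcc x hx y hy)).intervalIntegrable
  have hintφ : ∀ x y : ℝ, IntervalIntegrable (fun v => a - 2 * c * (v - g)) volume x y :=
    fun x y => (Continuous.intervalIntegrable (by fun_prop) x y)
  have h0I : (0:ℝ) ∈ Icc (0:ℝ) 1 := ⟨le_refl 0, zero_le_one⟩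
  -- difference of integrals
  have hsub : (∫ v in (0:ℝ)..u, lam v) - (∫ v in (0:ℝ)..g, lam v) = ∫ v in g..u, lam v :=
    intervalIntegral.integral_interval_sub_left (hint 0 h0I u hu) (hint 0 h0I g hgI)
  -- value of φ integral
  have hφval : (∫ v in g..u, (a - 2 * c * (v - g))) = (u - g) * a - c * (u - g) ^ 2 := by
    have hF : ∀ v ∈ uIcc g u, HasDerivAt (fun x => a * x - c * (x - g) ^ 2)
        (a - 2 * c * (v - g)) v := by
      intro v _
      have h1 : HasDerivAt (fun x : ℝ => a * x) a v := by
        simpa using (hasDerivAt_id v).const_mul a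
      have h2 : HasDerivAt (fun x : ℝ => c * (x - g) ^ 2) (2 * c * (v - g)) v := by
        have := (((hasDerivAt_id v).sub_const g).pow 2).const_mul c
        exact this.congr_deriv (by simp only [id, Nat.cast_ofNat, Nat.add_one_sub_one, pow_one, mul_one]; ring)
      exact h1.sub h2
    rw [intervalIntegral.integral_eq_sub_of_hasDerivAt hF (hintφ g u)]
    ring
  rw [hsub, ← hφval]
  -- compare the integrals
  rcases le_or_gt (g) u with hgu | hgu
  · apply intervalIntegral.integral_mono_ae_restrict hgu (hint _ hgI u hu) (hintφ _ u)
    have hne : ∀ᵐ v : ℝ, v ≠ g := by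
      have : (volume : Measure ℝ) {g} = 0 := measure_singleton _
      rw [ae_iff]
      convert this using 2
      ext x; simp
    filter_upwards [ae_restrict_mem measurableSet_Icc, ae_restrict_of_ae hne] with v hv hvne
    exact claimA v ⟨le_trans hg0 hv.1, le_trans hv.2 hu.2⟩ (lt_of_le_of_ne hv.1 (Ne.symm hvne))
  · rw [intervalIntegral.integral_symm, intervalIntegral.integral_symm u]
    have : (∫ v in u..(g), (a - 2 * c * (v - g))) ≤ ∫ v in u..(g), lam v := by
      apply intervalIntegral.integral_mono_ae_restrict hgu.le (hintφ u _) (hint u hu _ hgI)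
      have hne : ∀ᵐ v : ℝ, v ≠ g := by
        have : (volume : Measure ℝ) {g} = 0 := measure_singleton _
        rw [ae_iff]
        convert this using 2
        ext x; simp
      filter_upwards [ae_restrict_mem measurableSet_Icc, ae_restrict_of_ae hne] with v hv hvne
      exact claimB v ⟨le_trans hu.1 hv.1, le_trans hv.2 hg1⟩ (lt_of_le_of_ne hv.2 hvne)
    linarith
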